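/- Let m ≥ 2 be an integer. For every real δ > 0 there exist arbitrarily large positive integers n for which there is a sequence Σ = (a_1, …, a_n) of integers with every a_i ∈ [0, 2^{(1+δ)n}] such that e^m_Σ(A₁) ≠ e^m_Σ(A₂) for all distinct subsets A₁, A₂ ⊆ {1, …, n} with |A₁|, |A₂| ≥ m. -/

import Mathlib

/-- The `m`-th evaluation of the integer sequence `a` on the subset `A`:
the sum over all `m`-element subsets of `A` of the product of the entries.
It is `0` when `|A| < m`. -/
def mthEval (n m : ℕ) (a : Fin n → ℤ) (A : Finset (Fin n)) : ℤ :=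
  ∑ S ∈ A.powersetCard m, ∏ i ∈ S, a i

namespace Stmt16Aux

open Finset

/-- The number of `m`-element subsets of `A` containing a fixed `T ⊆ A`. -/
lemma card_filter_superset {α : Type*} [DecidableEq α] (A T : Finset α) (m : ℕ)
    (hTA : T ⊆ A) (hTm : T.card ≤ m) :
    ((A.powersetCard m).filter (fun S => T ⊆ S)).card
      = (A.card - T.card).choose (m - T.card) := by
  rw [← Finset.card_sdiff_of_subset hTA, ← Finset.card_powersetCard (m - T.card) (A \ T)]
  apply Finset.card_bij' (fun S _ => S \ T) (fun U _ => U ∪ T)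
  · intro S hS
    rw [Finset.mem_filter, Finset.mem_powersetCard] at hS
    obtain ⟨⟨hSA, hScard⟩, hTS⟩ := hS
    rw [Finset.mem_powersetCard]
    exact ⟨Finset.sdiff_subset_sdiff hSA (le_refl T), by rw [Finset.card_sdiff_of_subset hTS, hScard]⟩
  · intro U hU
    rw [Finset.mem_powersetCard] at hU
    obtain ⟨hUsub, hUcard⟩ := hU
    have hdisj : Disjoint U T := Finset.disjoint_of_subset_left hUsub Finset.sdiff_disjoint
    rw [Finset.mem_filter, Finset.mem_powersetCard]
    refine ⟨⟨Finset.union_subset (hUsub.trans Finset.sdiff_subset) hTA, ?_⟩,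
      Finset.subset_union_right⟩
    rw [Finset.card_union_of_disjoint hdisj, hUcard, Nat.sub_add_cancel hTm]
  · intro S hS
    rw [Finset.mem_filter] at hS
    exact Finset.sdiff_union_of_subset hS.2
  · intro U hU
    rw [Finset.mem_powersetCard] at hU
    have hdisj : Disjoint U T := Finset.disjoint_of_subset_left hU.1 Finset.sdiff_disjoint
    exact Finset.union_sdiff_cancel_right hdisj

/-- Expansion of the `m`-th evaluation of a sequence of the form `z i + 1`. -/
lemma mthEval_expand (n m : ℕ) (z : Fin n → ℤ) (A : Finset (Fin n)) :
    mthEval n m (fun i => z i + 1) A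
      = ∑ T ∈ A.powerset.filter (fun T => T.card ≤ m),
          ((A.card - T.card).choose (m - T.card) : ℤ) * ∏ i ∈ T, z i := by
  unfold mthEval
  have h1 : ∀ S ∈ A.powersetCard m, (∏ i ∈ S, (z i + 1))
      = ∑ T ∈ A.powerset, if T ⊆ S then ∏ i ∈ T, z i else 0 := by
    intro S hS
    rw [Finset.mem_powersetCard] at hS
    rw [Finset.prod_add]
    simp only [Finset.prod_const_one, mul_one]
    rw [← Finset.sum_filter]
    congr 1
    ext T
    simp only [Finset.mem_filter, Finset.mem_powerset]
    exact ⟨fun h => ⟨h.trans hS.1, h⟩, fun h => h.2⟩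
  rw [Finset.sum_congr rfl h1, Finset.sum_comm]
  have h2 : ∀ T ∈ A.powerset,
      (∑ S ∈ A.powersetCard m, if T ⊆ S then ∏ i ∈ T, z i else 0)
      = (((A.powersetCard m).filter (fun S => T ⊆ S)).card : ℤ) * ∏ i ∈ T, z i := by
    intro T _
    rw [← Finset.sum_filter, Finset.sum_const, nsmul_eq_mul]
  rw [Finset.sum_congr rfl h2]
  rw [← Finset.sum_filter_of_ne (p := fun T => T.card ≤ m)]
  · apply Finset.sum_congr rfl
    intro T hT
    rw [Finset.mem_filter, Finset.mem_powerset] at hT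
    rw [card_filter_superset A T m hT.1 hT.2]
  · intro T hT hne
    by_contra hTm
    push_neg at hTm
    apply hne
    have : (A.powersetCard m).filter (fun S => T ⊆ S) = ∅ := by
      rw [Finset.filter_eq_empty_iff]
      intro S hS
      rw [Finset.mem_powersetCard] at hS
      intro hTS
      exact absurd (Finset.card_le_card hTS) (by omega)
    rw [this]
    simp

/-- Decomposition of the `m`-th evaluation into constant, linear and higher parts. -/
lemma mthEval_decomp (n m : ℕ) (hm : 1 ≤ m) (z : Fin n → ℤ) (A : Finset (Fin n)) :
    mthEval n m (fun i => z i + 1) A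
      = (A.card.choose m : ℤ)
        + ((A.card - 1).choose (m - 1) : ℤ) * (∑ i ∈ A, z i)
        + ∑ T ∈ A.powerset.filter (fun T => 2 ≤ T.card ∧ T.card ≤ m),
            ((A.card - T.card).choose (m - T.card) : ℤ) * ∏ i ∈ T, z i := by
  rw [mthEval_expand]
  rw [← Finset.sum_filter_add_sum_filter_not (A.powerset.filter (fun T => T.card ≤ m))
        (fun T => T.card ≤ 1)]
  congr 1
  · have hset : (A.powerset.filter (fun T => T.card ≤ m)).filter (fun T => T.card ≤ 1)
        = insert (∅ : Finset (Fin n)) (A.image fun i => {i}) := by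
      ext T
      simp only [Finset.mem_filter, Finset.mem_powerset, Finset.mem_insert, Finset.mem_image]
      constructor
      · rintro ⟨⟨hTA, -⟩, hT1⟩
        interval_cases h : T.card
        · exact Or.inl (Finset.card_eq_zero.mp h)
        · obtain ⟨i, rfl⟩ := Finset.card_eq_one.mp h
          exact Or.inr ⟨i, hTA (Finset.mem_singleton_self i), rfl⟩
      · rintro (rfl | ⟨i, hi, rfl⟩)
        · simp
        · simp [Finset.singleton_subset_iff, hi, hm]
    rw [hset, Finset.sum_insert (by simp)]
    congr 1
    · simp
    · rw [Finset.sum_image (by intro i _ j _ h; simpa using h)]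
      rw [Finset.mul_sum]
      apply Finset.sum_congr rfl
      intro i _
      simp
  · rw [Finset.filter_filter]
    apply Finset.sum_congr _ (fun _ _ => rfl)
    congr 1
    ext T
    constructor
    · rintro ⟨h1, h2⟩; omega
    · rintro ⟨h1, h2⟩; omega

/-- The construction: `zf n K i = 2 ^ (K + i)`. -/
def zf (n K : ℕ) : Fin n → ℤ := fun i => 2 ^ (K + (i : ℕ))

lemma zf_dvd (n K : ℕ) (i : Fin n) : (2 : ℤ) ^ K ∣ zf n K i :=
  pow_dvd_pow 2 (Nat.le_add_right K i)

/-- Modulo `2 ^ K`, the `m`-th evaluation only sees the cardinality of `A`. -/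
lemma mthEval_mod (n m K : ℕ) (hm : 1 ≤ m) (A : Finset (Fin n)) :
    (2 : ℤ) ^ K ∣ mthEval n m (fun i => zf n K i + 1) A - (A.card.choose m : ℤ) := by
  rw [mthEval_decomp n m hm]
  have h1 : (2:ℤ)^K ∣ ((A.card - 1).choose (m-1) : ℤ) * (∑ i ∈ A, zf n K i) :=
    Dvd.dvd.mul_left (Finset.dvd_sum (fun i _ => zf_dvd n K i)) _
  have h2 : (2:ℤ)^K ∣ ∑ T ∈ A.powerset.filter (fun T => 2 ≤ T.card ∧ T.card ≤ m),
      ((A.card - T.card).choose (m - T.card) : ℤ) * ∏ i ∈ T, zf n K i := by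
    apply Finset.dvd_sum
    intro T hT
    rw [Finset.mem_filter] at hT
    obtain ⟨k, hk⟩ := Finset.card_pos.mp (by omega : 0 < T.card)
    exact Dvd.dvd.mul_left ((zf_dvd n K k).trans (Finset.dvd_prod_of_mem _ hk)) _
  have e : ((A.card.choose m : ℤ)
        + ((A.card - 1).choose (m - 1) : ℤ) * (∑ i ∈ A, zf n K i)
        + ∑ T ∈ A.powerset.filter (fun T => 2 ≤ T.card ∧ T.card ≤ m),
            ((A.card - T.card).choose (m - T.card) : ℤ) * ∏ i ∈ T, zf n K i)
      - (A.card.choose m : ℤ)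
      = ((A.card - 1).choose (m - 1) : ℤ) * (∑ i ∈ A, zf n K i)
        + ∑ T ∈ A.powerset.filter (fun T => 2 ≤ T.card ∧ T.card ≤ m),
            ((A.card - T.card).choose (m - T.card) : ℤ) * ∏ i ∈ T, zf n K i := by ring
  rw [e]
  exact dvd_add h1 h2

/-- The key 2-adic argument in the case of equal cardinalities. -/
lemma key_equal_card (n m K : ℕ) (hm : 1 ≤ m) (A B : Finset (Fin n))
    (hcard : A.card = B.card) (hms : m ≤ A.card)
    (i0 : Fin n) (hi0 : i0 ∈ A \ B)
    (hmin : ∀ x ∈ (A \ B) ∪ (B \ A), i0 ≤ x)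
    (hC1 : (A.card - 1).choose (m - 1) < 2 ^ K)
    (heq : mthEval n m (fun i => zf n K i + 1) A = mthEval n m (fun i => zf n K i + 1) B) :
    False := by
  classical
  set z := zf n K with hz
  set C1 : ℤ := ((A.card - 1).choose (m - 1) : ℤ) with hC1def
  set g : Finset (Fin n) → ℤ :=
    fun T => ((A.card - T.card).choose (m - T.card) : ℤ) * ∏ i ∈ T, z i with hg
  set P : Finset (Fin n) → Prop := fun T => 2 ≤ T.card ∧ T.card ≤ m with hP
  have hi0A : i0 ∈ A := (Finset.mem_sdiff.mp hi0).1
  have hi0B : i0 ∉ B := (Finset.mem_sdiff.mp hi0).2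
  have main : C1 * ((∑ i ∈ A, z i) - (∑ i ∈ B, z i))
      = (∑ T ∈ B.powerset.filter P, g T) - (∑ T ∈ A.powerset.filter P, g T) := by
    have dA := mthEval_decomp n m hm z A
    have dB := mthEval_decomp n m hm z B
    rw [← hcard] at dB
    rw [dA, dB] at heq
    simp only [← hg, ← hC1def] at heq ⊢
    linarith [heq]
  obtain ⟨W, hW⟩ : ∃ W : ℤ, (∑ i ∈ A, z i) - (∑ i ∈ B, z i)
      = 2 ^ (K + (i0 : ℕ)) * (1 + 2 * W) := by
    have hA' : (∑ i ∈ A, z i) = (∑ i ∈ A ∩ B, z i) + ∑ i ∈ A \ B, z i :=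
      (Finset.sum_inter_add_sum_sdiff A B z).symm
    have hB' : (∑ i ∈ B, z i) = (∑ i ∈ A ∩ B, z i) + ∑ i ∈ B \ A, z i := by
      rw [Finset.inter_comm]
      exact (Finset.sum_inter_add_sum_sdiff B A z).symm
    have hsplit : (∑ i ∈ A \ B, z i) = z i0 + ∑ i ∈ (A \ B).erase i0, z i :=
      (Finset.add_sum_erase _ z hi0).symm
    have hdvd : (2:ℤ) ^ (K + (i0:ℕ) + 1) ∣
        (∑ i ∈ (A \ B).erase i0, z i) - ∑ i ∈ B \ A, z i := by
      apply dvd_sub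
      · apply Finset.dvd_sum
        intro x hx
        have hx1 : x ∈ A \ B := Finset.mem_of_mem_erase hx
        have hne : x ≠ i0 := Finset.ne_of_mem_erase hx
        have hle : i0 ≤ x := hmin x (Finset.mem_union_left _ hx1)
        have : (i0 : ℕ) < (x : ℕ) := by
          rcases lt_or_eq_of_le hle with h | h
          · exact h
          · exact absurd h.symm hne
        exact pow_dvd_pow 2 (by omega)
      · apply Finset.dvd_sum
        intro x hx
        have hne : x ≠ i0 := by
          intro h; subst h
          exact hi0B (Finset.mem_sdiff.mp hx).1
        have hle : i0 ≤ x := hmin x (Finset.mem_union_right _ hx)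
        have : (i0 : ℕ) < (x : ℕ) := by
          rcases lt_or_eq_of_le hle with h | h
          · exact h
          · exact absurd h.symm hne
        exact pow_dvd_pow 2 (by omega)
    obtain ⟨W, hW⟩ := hdvd
    refine ⟨W, ?_⟩
    have hzi0 : z i0 = 2 ^ (K + (i0:ℕ)) := rfl
    rw [hA', hB', hsplit]
    rw [pow_succ] at hW
    have h3 : (∑ i ∈ (A \ B).erase i0, z i) - ∑ i ∈ B \ A, z i
        = 2 ^ (K + (i0:ℕ)) * (2 * W) := by rw [hW]; ring
    have goal : (∑ i ∈ A ∩ B, z i) + (z i0 + ∑ i ∈ (A \ B).erase i0, z i)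
        - ((∑ i ∈ A ∩ B, z i) + ∑ i ∈ B \ A, z i)
        = z i0 + ((∑ i ∈ (A \ B).erase i0, z i) - ∑ i ∈ B \ A, z i) := by ring
    rw [goal, h3, hzi0]
    ring
  have hR : (2:ℤ) ^ (K + (i0:ℕ)) * 2 ^ K ∣
      (∑ T ∈ B.powerset.filter P, g T) - (∑ T ∈ A.powerset.filter P, g T) := by
    set FA := A.powerset.filter P with hFA
    set FB := B.powerset.filter P with hFB
    have splitB : (∑ T ∈ FB, g T) = (∑ T ∈ FB ∩ FA, g T) + ∑ T ∈ FB \ FA, g T :=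
      (Finset.sum_inter_add_sum_sdiff FB FA g).symm
    have splitA : (∑ T ∈ FA, g T) = (∑ T ∈ FB ∩ FA, g T) + ∑ T ∈ FA \ FB, g T := by
      rw [Finset.inter_comm]
      exact (Finset.sum_inter_add_sum_sdiff FA FB g).symm
    rw [splitB, splitA]
    have key : ∀ (X Y : Finset (Fin n)), (∀ x ∈ X \ Y, x ∈ (A\B) ∪ (B\A)) →
        (2:ℤ) ^ (K + (i0:ℕ)) * 2 ^ K ∣
          ∑ T ∈ (X.powerset.filter P) \ (Y.powerset.filter P), g T := by
      intro X Y hXY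
      apply Finset.dvd_sum
      intro T hT
      rw [Finset.mem_sdiff, Finset.mem_filter, Finset.mem_powerset] at hT
      obtain ⟨⟨hTX, hP2, hPm⟩, hTnot⟩ := hT
      have hnsub : ¬ (T ⊆ Y) := by
        intro hTY
        exact hTnot (Finset.mem_filter.mpr ⟨Finset.mem_powerset.mpr hTY, hP2, hPm⟩)
      obtain ⟨k, hkT, hkY⟩ := Finset.not_subset.mp hnsub
      have hkXY : k ∈ X \ Y := Finset.mem_sdiff.mpr ⟨hTX hkT, hkY⟩
      have hk_le : i0 ≤ k := hmin k (hXY k hkXY)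
      have hprod : (2:ℤ) ^ (K + (i0:ℕ)) * 2 ^ K ∣ ∏ i ∈ T, z i := by
        rw [← Finset.mul_prod_erase T z hkT]
        apply mul_dvd_mul
        · exact pow_dvd_pow 2 (by
            have : (i0:ℕ) ≤ (k:ℕ) := hk_le
            omega)
        · obtain ⟨l, hl⟩ := Finset.card_pos.mp
            (by rw [Finset.card_erase_of_mem hkT]; omega : 0 < (T.erase k).card)
          exact (zf_dvd n K l).trans (Finset.dvd_prod_of_mem _ hl)
      exact Dvd.dvd.mul_left hprod _
    have h1 := key B A (fun x hx => Finset.mem_union_right _ hx)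
    have h2 := key A B (fun x hx => Finset.mem_union_left _ hx)
    have e : (∑ T ∈ FB ∩ FA, g T) + (∑ T ∈ FB \ FA, g T)
        - ((∑ T ∈ FB ∩ FA, g T) + ∑ T ∈ FA \ FB, g T)
        = (∑ T ∈ FB \ FA, g T) - (∑ T ∈ FA \ FB, g T) := by ring
    rw [e]
    exact dvd_sub h1 h2
  rw [hW] at main
  rw [← main] at hR
  have hcancel : (2:ℤ) ^ K ∣ C1 * (1 + 2 * W) := by
    have h2 : (2:ℤ) ^ (K + (i0:ℕ)) ≠ 0 := by positivity
    rw [show C1 * (2 ^ (K + (i0:ℕ)) * (1 + 2 * W))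
          = 2 ^ (K + (i0:ℕ)) * (C1 * (1 + 2 * W)) by ring] at hR
    exact (mul_dvd_mul_iff_left h2).mp hR
  have hnat : (2:ℕ) ^ K ∣ ((A.card - 1).choose (m - 1)) * (1 + 2*W).natAbs := by
    have := Int.natAbs_dvd_natAbs.mpr hcancel
    simpa [hC1def, Int.natAbs_mul, Int.natAbs_pow] using this
  have hodd : Odd (1 + 2*W).natAbs := Int.natAbs_odd.mpr ⟨W, by ring⟩
  have hcop : Nat.Coprime ((2:ℕ)^K) (1 + 2*W).natAbs :=
    Nat.Coprime.pow_left _ (Nat.coprime_two_left.mpr hodd)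
  have hfin : (2:ℕ)^K ∣ (A.card - 1).choose (m - 1) :=
    hcop.dvd_of_dvd_mul_right hnat
  have hpos : 0 < (A.card - 1).choose (m - 1) :=
    Nat.choose_pos (by omega)
  exact absurd (Nat.le_of_dvd hpos hfin) (not_le.mpr hC1)

lemma choose_strict {r x y : ℕ} (hr : 1 ≤ r) (hrx : r ≤ x) (hxy : x < y) :
    x.choose r < y.choose r := by
  obtain ⟨k, rfl⟩ : ∃ k, r = k + 1 := ⟨r - 1, by omega⟩
  induction y, hxy using Nat.le_induction with
  | base =>
    rw [Nat.choose_succ_succ']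
    have : 0 < x.choose k := Nat.choose_pos (by omega)
    omega
  | succ y hy ih =>
    rw [Nat.choose_succ_succ' y k]
    have : 0 ≤ y.choose k := Nat.zero_le _
    omega

/-- The case of different cardinalities. -/
lemma key_diff_card (n m K : ℕ) (hm : 1 ≤ m) (A B : Finset (Fin n))
    (hA : m ≤ A.card) (hB : m ≤ B.card) (hne : A.card ≠ B.card)
    (hbound : n.choose m < 2 ^ K)
    (heq : mthEval n m (fun i => zf n K i + 1) A = mthEval n m (fun i => zf n K i + 1) B) :
    False := by
  wlog hlt : A.card < B.card generalizing A B
  · exact this B A hB hA hne.symm heq.symm (by omega)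
  have h1 := mthEval_mod n m K hm A
  have h2 := mthEval_mod n m K hm B
  have hdvd : (2:ℤ)^K ∣ ((B.card.choose m : ℤ) - (A.card.choose m : ℤ)) := by
    have hd := dvd_sub h1 h2
    rw [heq] at hd
    have e : mthEval n m (fun i => zf n K i + 1) B - ↑(A.card.choose m) -
        (mthEval n m (fun i => zf n K i + 1) B - ↑(B.card.choose m))
        = (B.card.choose m : ℤ) - (A.card.choose m : ℤ) := by ring
    rwa [e] at hd
  have hmono : A.card.choose m < B.card.choose m := choose_strict hm hA hlt
  have hcast : ((B.card.choose m : ℤ) - (A.card.choose m : ℤ))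
      = ((B.card.choose m - A.card.choose m : ℕ) : ℤ) := by
    rw [Nat.cast_sub (le_of_lt hmono)]
  rw [hcast] at hdvd
  have hdvdnat : (2:ℕ)^K ∣ (B.card.choose m - A.card.choose m) := by
    exact_mod_cast hdvd
  have hle : (2:ℕ)^K ≤ B.card.choose m - A.card.choose m :=
    Nat.le_of_dvd (by omega) hdvdnat
  have hcardn : B.card ≤ n := by
    have := Finset.card_le_univ B
    simpa using this
  have : B.card.choose m ≤ n.choose m := Nat.choose_mono m hcardn
  omega

end Stmt16Aux

theorem stmt16 (m : ℕ) (hm : 2 ≤ m) (δ : ℝ) (hδ : 0 < δ) :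
    ∀ N : ℕ, ∃ n : ℕ, N ≤ n ∧ 0 < n ∧ ∃ a : Fin n → ℤ,
      (∀ i, 0 ≤ a i ∧ (a i : ℝ) ≤ (2 : ℝ) ^ ((1 + δ) * n)) ∧
      (∀ A₁ A₂ : Finset (Fin n), A₁ ≠ A₂ → m ≤ A₁.card → m ≤ A₂.card →
        mthEval n m a A₁ ≠ mthEval n m a A₂) := by
  classical
  intro N
  -- choose parameters
  obtain ⟨v0, hv0⟩ := exists_nat_gt ((3*(m:ℝ)+3)/δ)
  set v := max (max N 1) v0 with hvdef
  set j := 2*v with hjdef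
  set n := 2^j with hndef
  set K := m*j + m + 2 with hKdef
  have hm1 : 1 ≤ m := by omega
  have hNn : N ≤ n := by
    have h1 : N ≤ v := le_trans (le_max_left N 1) (le_max_left _ _)
    have h2 : j < n := by rw [hndef]; exact Nat.lt_two_pow_self
    omega
  have hnpos : 0 < n := Nat.pow_pos (by norm_num)
  -- the key real inequality : K ≤ δ * n
  have hKreal : ((K : ℕ) : ℝ) ≤ δ * (n : ℝ) := by
    have hv0v : v0 ≤ v := le_max_right _ _
    have hv1 : 1 ≤ v := le_trans (le_max_right N 1) (le_max_left _ _)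
    have hd1 : (3*(m:ℝ)+3) < δ * v0 := by
      rw [div_lt_iff₀ hδ] at hv0
      linarith [hv0]
    have hd2 : (3*(m:ℝ)+3) ≤ δ * v := by
      have : δ * v0 ≤ δ * v := by
        apply mul_le_mul_of_nonneg_left _ hδ.le
        exact_mod_cast hv0v
      linarith
    have hp : ((v:ℝ)+1) ≤ (2:ℝ)^v := by
      have h := Nat.lt_two_pow_self (n := v)
      have h' : (v+1 : ℕ) ≤ 2^v := h
      exact_mod_cast h'
    have hvpos : (0:ℝ) ≤ (v:ℝ) := by positivity
    have hnreal : ((n:ℕ) : ℝ) = (2:ℝ)^(2*v) := by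
      rw [hndef, hjdef]
      push_cast
      ring
    calc ((K : ℕ) : ℝ) = (m:ℝ)*(2*v) + m + 2 := by rw [hKdef, hjdef]; push_cast; ring
      _ ≤ (3*(m:ℝ)+3) * ((v:ℝ)+1) := by
          nlinarith [hvpos, (by exact_mod_cast hm : (2:ℝ) ≤ (m:ℝ)),
            (by exact_mod_cast hv1 : (1:ℝ) ≤ (v:ℝ))]
      _ ≤ (δ * v) * ((v:ℝ)+1) := by
          apply mul_le_mul_of_nonneg_right hd2
          linarith
      _ ≤ δ * (((v:ℝ)+1) * ((v:ℝ)+1)) := by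
          nlinarith [hδ.le]
      _ ≤ δ * ((2:ℝ)^v * (2:ℝ)^v) := by
          apply mul_le_mul_of_nonneg_left _ hδ.le
          have h0 : (0:ℝ) ≤ (v:ℝ)+1 := by linarith
          nlinarith [hp]
      _ = δ * (2:ℝ)^(2*v) := by rw [← pow_add]; ring_nf
      _ = δ * (n : ℝ) := by rw [hnreal]
  -- the binomial bound : choose n m < 2^K and similar
  have hchoose : ∀ s ≤ n, s.choose m < 2^K := by
    intro s hs
    have h1 : s.choose m ≤ s^m := Nat.choose_le_pow s m
    have h2 : s^m ≤ n^m := Nat.pow_le_pow_left hs m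
    have h3 : n^m = 2^(j*m) := by rw [hndef, ← pow_mul]
    have h4 : (2:ℕ)^(j*m) < 2^K := by
      apply Nat.pow_lt_pow_right (by norm_num)
      rw [hKdef, Nat.mul_comm j m]
      omega
    calc s.choose m ≤ s^m := h1
      _ ≤ n^m := h2
      _ = 2^(j*m) := h3
      _ < 2^K := h4
  refine ⟨n, hNn, hnpos, fun i => Stmt16Aux.zf n K i + 1, ?_, ?_⟩
  · -- bounds
    intro i
    simp only
    constructor
    · have h0 : (0:ℤ) ≤ Stmt16Aux.zf n K i := by
        unfold Stmt16Aux.zf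
        positivity
      linarith
    · -- (a i : ℝ) ≤ 2 ^ ((1+δ) * n)
      have hint : Stmt16Aux.zf n K i + 1 ≤ (2:ℤ)^(K + n) := by
        unfold Stmt16Aux.zf
        have hi : (i : ℕ) < n := i.isLt
        have h1 : (2:ℤ)^(K + (i:ℕ)) + 1 ≤ (2:ℤ)^(K + (i:ℕ)) + (2:ℤ)^(K + (i:ℕ)) := by
          have hz : (0:ℤ) < (2:ℤ)^(K + (i:ℕ)) := by positivity
          omega
        have h2 : (2:ℤ)^(K + (i:ℕ)) + (2:ℤ)^(K + (i:ℕ)) = (2:ℤ)^(K + (i:ℕ) + 1) := by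
          rw [pow_succ]; ring
        have h3 : (2:ℤ)^(K + (i:ℕ) + 1) ≤ (2:ℤ)^(K + n) :=
          pow_le_pow_right₀ (by norm_num) (by omega)
        omega
      have hcast : ((Stmt16Aux.zf n K i + 1 : ℤ) : ℝ) ≤ ((2:ℝ))^((K + n : ℕ)) := by
        have := hint
        have h2 : (((2:ℤ)^(K+n) : ℤ) : ℝ) = (2:ℝ)^(K+n) := by push_cast; ring
        calc ((Stmt16Aux.zf n K i + 1 : ℤ) : ℝ) ≤ (((2:ℤ)^(K+n) : ℤ) : ℝ) := by exact_mod_cast this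
          _ = (2:ℝ)^(K+n) := h2
      calc ((Stmt16Aux.zf n K i + 1 : ℤ) : ℝ) ≤ (2:ℝ)^((K + n : ℕ)) := hcast
        _ = (2:ℝ)^(((K + n : ℕ) : ℝ)) := by rw [Real.rpow_natCast]
        _ ≤ (2:ℝ)^((1 + δ) * (n:ℕ)) := by
            apply Real.rpow_le_rpow_of_exponent_le (by norm_num)
            have hKreal' : (m:ℝ)*j + m + 2 ≤ δ * n := by
              have h := hKreal
              rw [hKdef] at h
              push_cast at h
              linarith
            push_cast
            nlinarith [hKreal', Nat.cast_nonneg (α := ℝ) n]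
  · -- injectivity
    intro A B hne hA hB heq
    by_cases hcard : A.card = B.card
    · -- equal cards : 2-adic argument
      have hEne : ((A \ B) ∪ (B \ A)).Nonempty := by
        rw [Finset.nonempty_iff_ne_empty]
        intro h
        apply hne
        have h1 : A \ B = ∅ := Finset.union_eq_empty.mp h |>.1
        have h2 : B \ A = ∅ := Finset.union_eq_empty.mp h |>.2
        exact Finset.Subset.antisymm (Finset.sdiff_eq_empty_iff_subset.mp h1)
          (Finset.sdiff_eq_empty_iff_subset.mp h2)
      set i0 := ((A \ B) ∪ (B \ A)).min' hEne with hi0def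
      have hi0mem := ((A \ B) ∪ (B \ A)).min'_mem hEne
      have hmin : ∀ x ∈ (A \ B) ∪ (B \ A), i0 ≤ x :=
        fun x hx => Finset.min'_le _ x hx
      have hC1 : (A.card - 1).choose (m - 1) < 2 ^ K := by
        have h1 : (A.card - 1).choose (m-1) ≤ (A.card - 1)^(m-1) := Nat.choose_le_pow _ _
        have hcardn : A.card ≤ n := by
          have := Finset.card_le_univ A; simpa using this
        have h2 : (A.card - 1)^(m-1) ≤ n^(m-1) := Nat.pow_le_pow_left (by omega) _
        have h3 : (n:ℕ)^(m-1) ≤ n^m := Nat.pow_le_pow_right (by omega) (by omega)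
        have h4 : n^m = 2^(j*m) := by rw [hndef, ← pow_mul]
        have h5 : (2:ℕ)^(j*m) < 2^K := by
          apply Nat.pow_lt_pow_right (by norm_num)
          rw [hKdef, Nat.mul_comm j m]
          omega
        calc (A.card - 1).choose (m-1) ≤ (A.card - 1)^(m-1) := h1
          _ ≤ n^(m-1) := h2
          _ ≤ n^m := h3
          _ = 2^(j*m) := h4
          _ < 2^K := h5
      rcases Finset.mem_union.mp hi0mem with h | h
      · exact Stmt16Aux.key_equal_card n m K hm1 A B hcard hA i0 h hmin hC1 heq
      · apply Stmt16Aux.key_equal_card n m K hm1 B A hcard.symm hB i0 h _ _ heq.symm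
        · intro x hx
          apply hmin
          rwa [Finset.union_comm]
        · rwa [← hcard]
    · exact Stmt16Aux.key_diff_card n m K hm1 A B hA hB hcard
        (hchoose n (le_refl n)) heq
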